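/- For all q, n ≥ 1, Σ_{d ∥ q} |c̃_d(n)| = 2^{ω(q/(n,q)_{**})} · (n,q)_{**}. -/

import Mathlib

open Finset

def uDivisors (n : ℕ) : Finset ℕ := n.divisors.filter (fun d => Nat.gcd d (n / d) = 1)

def mustar (n : ℕ) : ℤ := (-1) ^ n.primeFactors.card

def gcud (n q : ℕ) : ℕ := (uDivisors n ∩ uDivisors q).sup id

def ctilde (q n : ℕ) : ℤ := ∑ d ∈ uDivisors (gcud n q), (d : ℤ) * mustar (q / d)

def fq (q : ℕ) (S : Finset ℕ) : ℕ := ∏ p ∈ S, p ^ q.factorization p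

lemma mem_uDivisors {m d : ℕ} : d ∈ uDivisors m ↔ (d ∣ m ∧ Nat.gcd d (m / d) = 1) ∧ m ≠ 0 := by
  simp [uDivisors, Nat.mem_divisors, and_assoc, and_comm, and_left_comm]

lemma uDiv_iff {m d : ℕ} (hm : m ≠ 0) :
    d ∈ uDivisors m ↔ d ∣ m ∧ ∀ p, d.factorization p = 0 ∨ d.factorization p = m.factorization p := by
  rw [mem_uDivisors, and_iff_left hm]
  constructor
  · rintro ⟨hd, hg⟩
    refine ⟨hd, fun p => ?_⟩
    have hd0 : d ≠ 0 := by rintro rfl; simp at hd; exact hm hd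
    have hmd0 : m / d ≠ 0 := by
      have := Nat.div_pos (Nat.le_of_dvd (Nat.pos_of_ne_zero hm) hd) (Nat.pos_of_ne_zero hd0)
      omega
    have hdis := (Nat.disjoint_primeFactors hd0 hmd0).mpr hg
    by_cases h0 : d.factorization p = 0
    · exact Or.inl h0
    · right
      have hp : p ∈ d.primeFactors := by
        rw [← Nat.support_factorization]; exact Finsupp.mem_support_iff.2 h0
      have hnp : p ∉ (m / d).primeFactors := Finset.disjoint_left.mp hdis hp
      have h2 : (m / d).factorization p = 0 := by
        rw [← Nat.support_factorization, Finsupp.notMem_support_iff] at hnp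
        exact hnp
      rw [Nat.factorization_div hd] at h2
      have hle := (Nat.factorization_le_iff_dvd hd0 hm).mpr hd p
      simp [Finsupp.tsub_apply] at h2
      omega
  · rintro ⟨hd, hfac⟩
    refine ⟨hd, ?_⟩
    have hd0 : d ≠ 0 := by rintro rfl; simp at hd; exact hm hd
    have hmd0 : m / d ≠ 0 := by
      have := Nat.div_pos (Nat.le_of_dvd (Nat.pos_of_ne_zero hm) hd) (Nat.pos_of_ne_zero hd0)
      omega
    rw [← Nat.coprime_iff_gcd_eq_one, ← Nat.disjoint_primeFactors hd0 hmd0,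
      Finset.disjoint_left]
    intro p hp hp2
    rw [← Nat.support_factorization, Finsupp.mem_support_iff] at hp hp2
    rw [Nat.factorization_div hd, Finsupp.tsub_apply] at hp2
    rcases hfac p with h | h <;> omega

section FQ
variable {q : ℕ} (hq : q ≠ 0)

lemma fq_pos {S : Finset ℕ} (hS : S ⊆ q.primeFactors) : 0 < fq q S := by
  apply Finset.prod_pos
  intro p hp
  exact pow_pos (Nat.prime_of_mem_primeFactors (hS hp)).pos _

lemma fq_ne_zero {S : Finset ℕ} (hS : S ⊆ q.primeFactors) : fq q S ≠ 0 :=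
  (fq_pos hS).ne'

lemma factorization_fq {S : Finset ℕ} (hS : S ⊆ q.primeFactors) (r : ℕ) :
    (fq q S).factorization r = if r ∈ S then q.factorization r else 0 := by
  unfold fq
  rw [Nat.factorization_prod (fun p hp =>
    pow_ne_zero _ (Nat.prime_of_mem_primeFactors (hS hp)).pos.ne')]
  rw [Finset.sum_apply']
  rw [Finset.sum_congr rfl (fun p hp => by
    rw [(Nat.prime_of_mem_primeFactors (hS hp)).factorization_pow, Finsupp.single_apply])]
  simp [Finset.sum_ite_eq]

lemma primeFactors_fq {S : Finset ℕ} (hS : S ⊆ q.primeFactors) :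
    (fq q S).primeFactors = S := by
  ext r
  rw [← Nat.support_factorization, Finsupp.mem_support_iff, factorization_fq hS]
  constructor
  · intro h; by_contra hr; simp [hr] at h
  · intro hr
    have := Nat.prime_of_mem_primeFactors (hS hr)
    have h2 : q.factorization r ≠ 0 := by
      have := hS hr
      rw [← Nat.support_factorization, Finsupp.mem_support_iff] at this
      exact this
    simp [hr, h2]

lemma fq_union {S S' : Finset ℕ} (h : Disjoint S S') :
    fq q (S ∪ S') = fq q S * fq q S' := Finset.prod_union h

include hq in
lemma fq_top : fq q q.primeFactors = q := by
  conv_rhs => rw [← Nat.factorization_prod_pow_eq_self hq]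
  rw [Finsupp.prod]
  rfl

lemma fq_agree {A U : Finset ℕ} (hA : A ⊆ q.primeFactors) (hU : U ⊆ A) :
    fq (fq q A) U = fq q U := by
  apply Finset.prod_congr rfl
  intro p hp
  rw [factorization_fq hA, if_pos (hU hp)]

include hq in
lemma fq_div {S S' : Finset ℕ} (hS' : S' ⊆ q.primeFactors) (hS : S ⊆ S') :
    fq q S' / fq q S = fq q (S' \ S) := by
  have h1 : fq q S' = fq q S * fq q (S' \ S) := by
    rw [← fq_union Finset.disjoint_sdiff, Finset.union_sdiff_of_subset hS]
  rw [h1, Nat.mul_div_cancel_left _ (fq_pos (hS.trans hS'))]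

include hq in
lemma uDivisors_eq_image :
    uDivisors q = q.primeFactors.powerset.image (fq q) := by
  ext d
  rw [uDiv_iff hq, Finset.mem_image]
  constructor
  · rintro ⟨hd, hfac⟩
    have hd0 : d ≠ 0 := by rintro rfl; simp at hd; exact hq hd
    refine ⟨d.primeFactors, Finset.mem_powerset.2 (Nat.primeFactors_mono hd hq), ?_⟩
    conv_rhs => rw [← Nat.factorization_prod_pow_eq_self hd0, Finsupp.prod]
    apply Finset.prod_congr rfl
    intro p hp
    rcases hfac p with h | h
    · rw [← Nat.support_factorization, Finsupp.mem_support_iff] at hp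
      exact absurd h hp
    · rw [h]
  · rintro ⟨S, hS, rfl⟩
    rw [Finset.mem_powerset] at hS
    constructor
    · calc fq q S ∣ fq q q.primeFactors := Finset.prod_dvd_prod_of_subset _ _ _ hS
        _ = q := fq_top hq
    · intro p
      rw [factorization_fq hS]
      by_cases h : p ∈ S <;> simp [h]

include hq in
lemma fq_injOn {S S' : Finset ℕ} (hS : S ⊆ q.primeFactors) (hS' : S' ⊆ q.primeFactors)
    (h : fq q S = fq q S') : S = S' := by
  rw [← primeFactors_fq hS, ← primeFactors_fq hS', h]

end FQ

def Tset (n q : ℕ) : Finset ℕ := q.primeFactors.filter (fun p => n.factorization p = q.factorization p)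

lemma Tset_subset (n q : ℕ) : Tset n q ⊆ q.primeFactors := Finset.filter_subset _ _

lemma gcud_eq {n q : ℕ} (hn : n ≠ 0) (hq : q ≠ 0) : gcud n q = fq q (Tset n q) := by
  have hT : Tset n q ⊆ q.primeFactors := Tset_subset n q
  have hg0 : fq q (Tset n q) ≠ 0 := fq_ne_zero hT
  have hmemq : fq q (Tset n q) ∈ uDivisors q := by
    rw [uDivisors_eq_image hq, Finset.mem_image]
    exact ⟨_, Finset.mem_powerset.2 hT, rfl⟩
  have hmemn : fq q (Tset n q) ∈ uDivisors n := by
    rw [uDiv_iff hn]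
    constructor
    · rw [← Nat.factorization_le_iff_dvd hg0 hn]
      intro p
      rw [factorization_fq hT]
      by_cases h : p ∈ Tset n q
      · rw [if_pos h]
        have := (Finset.mem_filter.1 h).2
        omega
      · simp [h]
    · intro p
      rw [factorization_fq hT]
      by_cases h : p ∈ Tset n q
      · right; rw [if_pos h]; exact ((Finset.mem_filter.1 h).2).symm
      · simp [h]
  apply le_antisymm
  · apply Finset.sup_le
    intro d hd
    rw [Finset.mem_inter] at hd
    obtain ⟨hdn, hdq⟩ := hd
    rw [uDiv_iff hn] at hdn
    rw [uDiv_iff hq] at hdq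
    have hd0 : d ≠ 0 := by
      rintro rfl
      exact hn (zero_dvd_iff.mp hdn.1)
    have hdvd : d ∣ fq q (Tset n q) := by
      rw [← Nat.factorization_le_iff_dvd hd0 hg0]
      intro p
      rw [factorization_fq hT]
      rcases hdn.2 p with h | h
      · simp [h]
      rcases hdq.2 p with h' | h'
      · simp [h']
      by_cases h0 : d.factorization p = 0
      · simp [h0]
      have hp : p ∈ Tset n q := by
        rw [Tset, Finset.mem_filter, ← Nat.support_factorization, Finsupp.mem_support_iff]
        exact ⟨by omega, by omega⟩
      rw [if_pos hp]
      omega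
    exact Nat.le_of_dvd (Nat.pos_of_ne_zero hg0) hdvd
  · exact Finset.le_sup (f := id) (Finset.mem_inter.2 ⟨hmemn, hmemq⟩)

lemma gcud_fq {n q : ℕ} (hn : n ≠ 0) {S : Finset ℕ} (hS : S ⊆ q.primeFactors) :
    gcud n (fq q S) = fq q (S ∩ Tset n q) := by
  rw [gcud_eq hn (fq_ne_zero hS)]
  have h1 : Tset n (fq q S) = S ∩ Tset n q := by
    ext p
    rw [Tset, Tset, Finset.mem_filter, Finset.mem_inter, Finset.mem_filter,
      primeFactors_fq hS, factorization_fq hS]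
    constructor
    · rintro ⟨hp, h⟩; rw [if_pos hp] at h; exact ⟨hp, hS hp, h⟩
    · rintro ⟨hp, _, h⟩; exact ⟨hp, by rw [if_pos hp]; exact h⟩
  rw [h1, fq_agree hS Finset.inter_subset_left]

lemma sdiff_card_split {S T U : Finset ℕ} (hU : U ⊆ S ∩ T) :
    (S \ U).card = (S \ T).card + ((S ∩ T) \ U).card := by
  rw [← Finset.card_union_of_disjoint]
  · congr 1
    ext p
    simp only [Finset.mem_union, Finset.mem_sdiff, Finset.mem_inter]
    constructor
    · rintro ⟨hpS, hpU⟩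
      by_cases hpT : p ∈ T
      · exact Or.inr ⟨⟨hpS, hpT⟩, hpU⟩
      · exact Or.inl ⟨hpS, hpT⟩
    · rintro (⟨hpS, hpT⟩ | ⟨⟨hpS, _⟩, hpU⟩)
      · exact ⟨hpS, fun h => hpT (Finset.mem_inter.1 (hU h)).2⟩
      · exact ⟨hpS, hpU⟩
  · rw [Finset.disjoint_left]
    intro p hp1 hp2
    simp only [Finset.mem_sdiff, Finset.mem_inter] at hp1 hp2
    tauto

lemma ctilde_fq {n q : ℕ} (hn : n ≠ 0) (hq : q ≠ 0) {S : Finset ℕ} (hS : S ⊆ q.primeFactors) :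
    ctilde (fq q S) n =
      (-1 : ℤ) ^ (S \ Tset n q).card *
        ∏ p ∈ S ∩ Tset n q, ((p : ℤ) ^ q.factorization p - 1) := by
  set T := Tset n q with hT
  have hA : S ∩ T ⊆ q.primeFactors := Finset.inter_subset_left.trans hS
  rw [ctilde, gcud_fq hn hS]
  have himg : uDivisors (fq q (S ∩ T)) = (S ∩ T).powerset.image (fq q) := by
    rw [uDivisors_eq_image (fq_ne_zero hA), primeFactors_fq hA]
    apply Finset.image_congr
    intro U hU
    simp only [Finset.coe_powerset, Set.mem_preimage, Set.mem_powerset_iff,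
      Finset.coe_subset] at hU
    exact fq_agree hA hU
  rw [himg, Finset.sum_image (fun U hU V hV h =>
    fq_injOn hq ((Finset.mem_powerset.1 hU).trans hA) ((Finset.mem_powerset.1 hV).trans hA) h)]
  have hterm : ∀ U ∈ (S ∩ T).powerset, (fq q U : ℤ) * mustar (fq q S / fq q U) =
      (-1 : ℤ) ^ (S \ T).card *
        ((∏ p ∈ U, (p : ℤ) ^ q.factorization p) * (-1 : ℤ) ^ ((S ∩ T) \ U).card) := by
    intro U hU
    rw [Finset.mem_powerset] at hU
    have hUS : U ⊆ S := hU.trans Finset.inter_subset_left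
    rw [fq_div hq hS hUS, mustar, primeFactors_fq ((Finset.sdiff_subset).trans hS),
      sdiff_card_split hU, pow_add]
    push_cast [fq]
    ring
  rw [Finset.sum_congr rfl hterm, ← Finset.mul_sum]
  congr 1
  have h2 : ∀ U ∈ (S ∩ T).powerset,
      (∏ p ∈ U, (p : ℤ) ^ q.factorization p) * (-1 : ℤ) ^ ((S ∩ T) \ U).card =
      (∏ p ∈ U, (p : ℤ) ^ q.factorization p) * ∏ _p ∈ (S ∩ T) \ U, (-1 : ℤ) := by
    intro U _
    rw [Finset.prod_const]
  rw [Finset.sum_congr rfl h2,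
    ← Finset.prod_add (fun p : ℕ => (p : ℤ) ^ q.factorization p) (fun _ => (-1 : ℤ))]
  apply Finset.prod_congr rfl
  intro p _
  ring

theorem sum_abs_ctilde (q n : ℕ) (hq : 0 < q) (hn : 0 < n) :
    ∑ d ∈ uDivisors q, |ctilde d n| =
      2 ^ (q / gcud n q).primeFactors.card * (gcud n q : ℤ) := by
  have hq' : q ≠ 0 := hq.ne'
  have hn' : n ≠ 0 := hn.ne'
  set P := q.primeFactors with hP
  set T := Tset n q with hTdef
  have hT : T ⊆ P := Tset_subset n q
  -- RHS rewriting
  have hgcud : gcud n q = fq q T := gcud_eq hn' hq'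
  have hqdiv : q / gcud n q = fq q (P \ T) := by
    have hdd := fq_div hq' (Finset.Subset.refl P) hT
    rw [show fq q P = q from fq_top hq'] at hdd
    rw [hgcud, hdd]
  rw [hqdiv, hgcud, primeFactors_fq Finset.sdiff_subset]
  -- LHS: sum over powerset
  rw [uDivisors_eq_image hq', Finset.sum_image (fun U hU V hV h =>
    fq_injOn hq' (Finset.mem_powerset.1 hU) (Finset.mem_powerset.1 hV) h)]
  have hterm : ∀ S ∈ P.powerset, |ctilde (fq q S) n| =
      ∏ p ∈ S, (if p ∈ T then (p : ℤ) ^ q.factorization p - 1 else 1) := by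
    intro S hS
    rw [Finset.mem_powerset] at hS
    rw [ctilde_fq hn' hq' hS, abs_mul, abs_pow, abs_neg, abs_one, one_pow, one_mul]
    have hnonneg : ∀ p ∈ S ∩ T, (0 : ℤ) ≤ (p : ℤ) ^ q.factorization p - 1 := by
      intro p hp
      have hprime := Nat.prime_of_mem_primeFactors (hS (Finset.mem_inter.1 hp).1)
      have h1 : (1 : ℤ) ≤ (p : ℤ) ^ q.factorization p :=
        one_le_pow₀ (by exact_mod_cast hprime.one_lt.le)
      omega
    rw [abs_of_nonneg (Finset.prod_nonneg hnonneg), ← Finset.filter_mem_eq_inter,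
      Finset.prod_filter]
  rw [Finset.sum_congr rfl hterm]
  have key : ∑ S ∈ P.powerset,
      ∏ p ∈ S, (if p ∈ T then (p : ℤ) ^ q.factorization p - 1 else 1) =
      ∏ p ∈ P, ((if p ∈ T then (p : ℤ) ^ q.factorization p - 1 else 1) + 1) := by
    rw [Finset.prod_add]
    apply Finset.sum_congr rfl
    intro S _
    simp
  rw [key, ← Finset.prod_sdiff hT]
  have h1 : ∏ p ∈ P \ T, ((if p ∈ T then (p : ℤ) ^ q.factorization p - 1 else 1) + 1) =
      2 ^ (P \ T).card := by
    rw [← Finset.prod_const]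
    apply Finset.prod_congr rfl
    intro p hp
    rw [if_neg (Finset.mem_sdiff.1 hp).2]
    ring
  have h2 : ∏ p ∈ T, ((if p ∈ T then (p : ℤ) ^ q.factorization p - 1 else 1) + 1) =
      (fq q T : ℤ) := by
    push_cast [fq]
    apply Finset.prod_congr rfl
    intro p hp
    rw [if_pos hp]
    ring
  rw [h1, h2]
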